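/- Let P be a finite point set in the plane. In the rectangle of influence graph of P, every pair of distinct points p, q ∈ P is connected by an xy-monotone path all of whose vertices lie inside the closed axis-aligned rectangle with corners p and q. -/

import Mathlib

open scoped BigOperators

noncomputable section

/-- A point in the Euclidean plane. -/
abbrev Pt : Type := EuclideanSpace ℝ (Fin 2)

noncomputable instance : DecidableEq Pt := Classical.decEq _

/-- A real sequence is monotone (increasing or decreasing) on indices `0..t`. -/
def MonoTo (f : ℕ → ℝ) (t : ℕ) : Prop :=
  (∀ i j : ℕ, i ≤ j → j ≤ t → f i ≤ f j) ∨ (∀ i j : ℕ, i ≤ j → j ≤ t → f j ≤ f i)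

/-- A point sequence is `y`-monotone on indices `0..t`. -/
def YMono (q : ℕ → Pt) (t : ℕ) : Prop := MonoTo (fun i => q i 1) t

/-- A point sequence is `xy`-monotone on indices `0..t`. -/
def XYMono (q : ℕ → Pt) (t : ℕ) : Prop :=
  MonoTo (fun i => q i 0) t ∧ MonoTo (fun i => q i 1) t

/-- `E` is the edge set of a geometric graph with vertex set `P` (no loops). -/
def IsGraphOn (P : Finset Pt) (E : Finset (Sym2 Pt)) : Prop :=
  ∀ p q : Pt, s(p, q) ∈ E → p ∈ P ∧ q ∈ P ∧ p ≠ q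

/-- `w 0, …, w t` is a path of `E` from `a` to `b`. -/
def IsPathBetween (E : Finset (Sym2 Pt)) (w : ℕ → Pt) (t : ℕ) (a b : Pt) : Prop :=
  w 0 = a ∧ w t = b ∧ ∀ i : ℕ, i < t → s(w i, w (i + 1)) ∈ E

/-- `a` and `b` are connected by a `y`-monotone path of `E`. -/
def ConnYMono (E : Finset (Sym2 Pt)) (a b : Pt) : Prop :=
  ∃ w t, IsPathBetween E w t a b ∧ YMono w t

/-- `a` and `b` are connected by an `xy`-monotone path of `E`. -/
def ConnXYMono (E : Finset (Sym2 Pt)) (a b : Pt) : Prop :=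
  ∃ w t, IsPathBetween E w t a b ∧ XYMono w t

/-- Cost of a geometric graph: sum of Euclidean lengths of edges. -/
def cost (E : Finset (Sym2 Pt)) : ℝ :=
  ∑ e ∈ E, Sym2.lift ⟨fun p q => dist p q, fun p q => dist_comm p q⟩ e

/-- Closed axis-aligned rectangle with corners `p` and `q`. -/
def Rect (p q : Pt) : Set Pt :=
  {z | min (p 0) (q 0) ≤ z 0 ∧ z 0 ≤ max (p 0) (q 0) ∧
       min (p 1) (q 1) ≤ z 1 ∧ z 1 ≤ max (p 1) (q 1)}

/-- `p` and `q` are rectangularly visible in `P`. -/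
def RectVisible (P : Finset Pt) (p q : Pt) : Prop :=
  ∀ r ∈ P, r ∈ Rect p q → r = p ∨ r = q

/-- Adjacency in the rectangle of influence graph of `P`. -/
def RIGAdj (P : Finset Pt) (a b : Pt) : Prop :=
  a ∈ P ∧ b ∈ P ∧ a ≠ b ∧ RectVisible P a b

/-- A spanning graph on vertex set `V` in which every root in `R` is connected
to every vertex by a `y`-monotone path. -/
def RootedSpan (V R : Finset Pt) (E : Finset (Sym2 Pt)) : Prop :=
  IsGraphOn V E ∧ ∀ r ∈ R, ∀ p ∈ V, ConnYMono E r p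

/-- `E` is a minimum-cost rooted `y`-monotone spanning graph of `V` with roots `R`. -/
def IsMinRooted (V R : Finset Pt) (E : Finset (Sym2 Pt)) : Prop :=
  RootedSpan V R E ∧ ∀ E', RootedSpan V R E' → cost E ≤ cost E'

/-- First rotated coordinate (rotation of axes by angle `θ`). -/
def rotX (θ : ℝ) (z : Pt) : ℝ := Real.cos θ * z 0 + Real.sin θ * z 1

/-- Second rotated coordinate (rotation of axes by angle `θ`). -/
def rotY (θ : ℝ) (z : Pt) : ℝ := -Real.sin θ * z 0 + Real.cos θ * z 1

/-- Closed rectangle with corners `p`, `q` w.r.t. the axes rotated by `θ`. -/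
def RectRot (θ : ℝ) (p q : Pt) : Set Pt :=
  {z | min (rotX θ p) (rotX θ q) ≤ rotX θ z ∧ rotX θ z ≤ max (rotX θ p) (rotX θ q) ∧
       min (rotY θ p) (rotY θ q) ≤ rotY θ z ∧ rotY θ z ≤ max (rotY θ p) (rotY θ q)}

/-- Points of `P` rectangularly visible from `p` w.r.t. the axes rotated by `θ`. -/
def RVrot (θ : ℝ) (P : Finset Pt) (p : Pt) : Set Pt :=
  {q | q ∈ P ∧ q ≠ p ∧ ∀ r ∈ P, r ∈ RectRot θ p q → r = p ∨ r = q}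

/-- Adjacency in the rectangle of influence graph of `P` w.r.t. the axes rotated by `θ`. -/
def RIGrotAdj (θ : ℝ) (P : Finset Pt) (a b : Pt) : Prop :=
  a ∈ P ∧ b ∈ P ∧ a ≠ b ∧ ∀ r ∈ P, r ∈ RectRot θ a b → r = a ∨ r = b

lemma corner_mem_rect_left (p q : Pt) : p ∈ Rect p q :=
  ⟨min_le_left _ _, le_max_left _ _, min_le_left _ _, le_max_left _ _⟩

lemma corner_mem_rect_right (p q : Pt) : q ∈ Rect p q :=
  ⟨min_le_right _ _, le_max_right _ _, min_le_right _ _, le_max_right _ _⟩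

lemma rect_comm (p q : Pt) : Rect p q = Rect q p := by
  simp [Rect, min_comm, max_comm]

lemma rect_sub {p q r : Pt} (hr : r ∈ Rect p q) : Rect p r ⊆ Rect p q := by
  intro z hz
  obtain ⟨h1, h2, h3, h4⟩ := hr
  obtain ⟨g1, g2, g3, g4⟩ := hz
  refine ⟨?_, ?_, ?_, ?_⟩
  · exact le_trans (le_min (min_le_left _ _) h1) g1
  · exact le_trans g2 (max_le (le_max_left _ _) h2)
  · exact le_trans (le_min (min_le_left _ _) h3) g3
  · exact le_trans g4 (max_le (le_max_left _ _) h4)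

lemma coord_eq_of_rect {a b c : ℝ} (h1 : min a b ≤ c) (h2 : c ≤ max a b)
    (h3 : min a c ≤ b) (h4 : b ≤ max a c) : c = b := by
  rcases le_total a b with h | h <;> rcases le_total a c with h' | h' <;>
    simp [min_def, max_def, h, h'] at * <;> linarith

lemma eq_of_mem_rect {p q r : Pt} (hr : r ∈ Rect p q) (hq : q ∈ Rect p r) : r = q := by
  obtain ⟨h1, h2, h3, h4⟩ := hr
  obtain ⟨g1, g2, g3, g4⟩ := hq
  apply PiLp.ext
  intro i
  fin_cases i
  · exact coord_eq_of_rect h1 h2 g1 g2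
  · exact coord_eq_of_rect h3 h4 g3 g4

lemma monoTo_up {f : ℕ → ℝ} {t : ℕ} (h : MonoTo f t) (h0 : f 0 ≤ f t) :
    ∀ i j : ℕ, i ≤ j → j ≤ t → f i ≤ f j := by
  rcases h with h | h
  · exact h
  · intro i j hij hjt
    have h1 := h 0 i (Nat.zero_le _) (le_trans hij hjt)
    have h2 := h j t hjt le_rfl
    linarith

lemma monoTo_down {f : ℕ → ℝ} {t : ℕ} (h : MonoTo f t) (h0 : f t ≤ f 0) :
    ∀ i j : ℕ, i ≤ j → j ≤ t → f j ≤ f i := by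
  rcases h with h | h
  · intro i j hij hjt
    have h1 := h 0 i (Nat.zero_le _) (le_trans hij hjt)
    have h2 := h j t hjt le_rfl
    linarith
  · exact h

lemma monoTo_concat {f1 f2 : ℕ → ℝ} {t1 t2 : ℕ}
    (h1 : MonoTo f1 t1) (h2 : MonoTo f2 t2) (hmid : f1 t1 = f2 0)
    (hb : (f1 0 ≤ f1 t1 ∧ f2 0 ≤ f2 t2) ∨ (f1 t1 ≤ f1 0 ∧ f2 t2 ≤ f2 0)) :
    MonoTo (fun i => if i ≤ t1 then f1 i else f2 (i - t1)) (t1 + t2) := by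
  rcases hb with ⟨hb1, hb2⟩ | ⟨hb1, hb2⟩
  · left
    intro i j hij hjt
    have H1 := monoTo_up h1 hb1
    have H2 := monoTo_up h2 hb2
    by_cases hj : j ≤ t1
    · simp only [le_trans hij hj, hj, if_true]
      exact H1 i j hij hj
    · push_neg at hj
      simp only [Nat.not_le.mpr hj, if_false]
      by_cases hi : i ≤ t1
      · simp only [hi, if_true]
        calc f1 i ≤ f1 t1 := H1 i t1 hi le_rfl
          _ = f2 0 := hmid
          _ ≤ f2 (j - t1) := H2 0 (j - t1) (Nat.zero_le _) (by omega)
      · simp only [hi, if_false]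
        exact H2 (i - t1) (j - t1) (by omega) (by omega)
  · right
    intro i j hij hjt
    have H1 := monoTo_down h1 hb1
    have H2 := monoTo_down h2 hb2
    by_cases hj : j ≤ t1
    · simp only [le_trans hij hj, hj, if_true]
      exact H1 i j hij hj
    · push_neg at hj
      simp only [Nat.not_le.mpr hj, if_false]
      by_cases hi : i ≤ t1
      · simp only [hi, if_true]
        calc f2 (j - t1) ≤ f2 0 := H2 0 (j - t1) (Nat.zero_le _) (by omega)
          _ = f1 t1 := hmid.symm
          _ ≤ f1 i := H1 i t1 hi le_rfl
      · simp only [hi, if_false]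
        exact H2 (i - t1) (j - t1) (by omega) (by omega)

lemma monoTo_one (f : ℕ → ℝ) : MonoTo f 1 := by
  rcases le_total (f 0) (f 1) with h | h
  · left
    intro i j hij hj1
    interval_cases j <;> interval_cases i <;> simp_all
  · right
    intro i j hij hj1
    interval_cases j <;> interval_cases i <;> simp_all

open Classical in
lemma rig_main_aux : ∀ (n : ℕ) (P : Finset Pt) (p q : Pt), p ∈ P → q ∈ P → p ≠ q →
    (P.filter (fun z => z ∈ Rect p q)).card ≤ n →
    ∃ (w : ℕ → Pt) (t : ℕ), w 0 = p ∧ w t = q ∧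
      (∀ i : ℕ, i < t → RIGAdj P (w i) (w (i + 1))) ∧
      XYMono w t ∧ (∀ i : ℕ, i ≤ t → w i ∈ Rect p q) := by
  intro n
  induction n with
  | zero =>
    intro P p q hp hq hpq hc
    exfalso
    have : p ∈ P.filter (fun z => z ∈ Rect p q) :=
      Finset.mem_filter.mpr ⟨hp, corner_mem_rect_left p q⟩
    have := Finset.card_pos.mpr ⟨p, this⟩
    omega
  | succ n ih =>
    intro P p q hp hq hpq hc
    by_cases hbase : ∀ r ∈ P, r ∈ Rect p q → r = p ∨ r = q
    · -- p and q are rectangularly visible: single edge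
      refine ⟨fun i => if i = 0 then p else q, 1, by simp, by simp, ?_, ?_, ?_⟩
      · intro i hi
        interval_cases i
        simpa using ⟨hp, hq, hpq, hbase⟩
      · exact ⟨monoTo_one _, monoTo_one _⟩
      · intro i hi
        by_cases h : i = 0
        · simp only [h, if_true]; exact corner_mem_rect_left p q
        · simp only [h, if_false]; exact corner_mem_rect_right p q
    · push_neg at hbase
      obtain ⟨r, hrP, hrR, hrpq⟩ := hbase
      obtain ⟨hrp, hrq⟩ := hrpq
      have sub1 : Rect p r ⊆ Rect p q := rect_sub hrR
      have sub2 : Rect r q ⊆ Rect p q := by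
        rw [rect_comm r q, rect_comm p q]
        exact rect_sub (by rwa [rect_comm] at hrR)
      have hq_not : q ∉ Rect p r := fun h => hrq (eq_of_mem_rect hrR h)
      have hp_not : p ∉ Rect r q := by
        intro h
        rw [rect_comm] at h
        exact hrp (eq_of_mem_rect (by rwa [rect_comm] at hrR) h)
      have card1 : (P.filter (fun z => z ∈ Rect p r)).card ≤ n := by
        have hss : P.filter (fun z => z ∈ Rect p r) ⊂ P.filter (fun z => z ∈ Rect p q) := by
          refine Finset.ssubset_iff_of_subset
            (Finset.monotone_filter_right P (fun z _ hz => sub1 hz)) |>.mpr ?_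
          exact ⟨q, Finset.mem_filter.mpr ⟨hq, corner_mem_rect_right p q⟩,
            fun h => hq_not (Finset.mem_filter.mp h).2⟩
        have := Finset.card_lt_card hss
        omega
      have card2 : (P.filter (fun z => z ∈ Rect r q)).card ≤ n := by
        have hss : P.filter (fun z => z ∈ Rect r q) ⊂ P.filter (fun z => z ∈ Rect p q) := by
          refine Finset.ssubset_iff_of_subset
            (Finset.monotone_filter_right P (fun z _ hz => sub2 hz)) |>.mpr ?_
          exact ⟨p, Finset.mem_filter.mpr ⟨hp, corner_mem_rect_left p q⟩,
            fun h => hp_not (Finset.mem_filter.mp h).2⟩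
        have := Finset.card_lt_card hss
        omega
      obtain ⟨w1, t1, hw10, hw1t, he1, hm1, hr1⟩ := ih P p r hp hrP (Ne.symm hrp) card1
      obtain ⟨w2, t2, hw20, hw2t, he2, hm2, hr2⟩ := ih P r q hrP hq hrq card2
      have ht2 : t2 ≠ 0 := by
        rintro rfl
        exact hrq (hw20 ▸ hw2t ▸ rfl)
      refine ⟨fun i => if i ≤ t1 then w1 i else w2 (i - t1), t1 + t2, by simpa using hw10,
        ?_, ?_, ?_, ?_⟩
      · have : ¬ (t1 + t2 ≤ t1) := by omega
        simp only [this, if_false, Nat.add_sub_cancel_left]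
        exact hw2t
      · intro i hi
        by_cases h : i < t1
        · have h1 : i ≤ t1 := le_of_lt h
          have h2 : i + 1 ≤ t1 := h
          simp only [h1, h2, if_true]
          exact he1 i h
        · push_neg at h
          have h2 : ¬ (i + 1 ≤ t1) := by omega
          have key : (if i ≤ t1 then w1 i else w2 (i - t1)) = w2 (i - t1) := by
            by_cases h3 : i ≤ t1
            · have : i = t1 := le_antisymm h3 h
              simp [this, hw1t, hw20]
            · simp [h3]
          simp only [h2, if_false, key]
          have : i + 1 - t1 = i - t1 + 1 := by omega
          rw [this]
          exact he2 (i - t1) (by omega)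
      · have hrx : min (p 0) (q 0) ≤ r 0 ∧ r 0 ≤ max (p 0) (q 0) := ⟨hrR.1, hrR.2.1⟩
        have hry : min (p 1) (q 1) ≤ r 1 ∧ r 1 ≤ max (p 1) (q 1) := ⟨hrR.2.2.1, hrR.2.2.2⟩
        constructor
        · have := monoTo_concat (f1 := fun i => w1 i 0) (f2 := fun i => w2 i 0)
            hm1.1 hm2.1 (by simp [hw1t, hw20]) ?_
          · convert this using 2 with i
            simp [apply_ite (fun z : Pt => z 0)]
          · simp only [hw10, hw1t, hw20, hw2t]
            rcases le_total (p 0) (q 0) with h | h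
            · left
              constructor <;> [skip; skip] <;>
                · have h1 := hrx.1; have h2 := hrx.2
                  rw [min_eq_left h] at h1; rw [max_eq_right h] at h2; linarith
            · right
              constructor <;> [skip; skip] <;>
                · have h1 := hrx.1; have h2 := hrx.2
                  rw [min_eq_right h] at h1; rw [max_eq_left h] at h2; linarith
        · have := monoTo_concat (f1 := fun i => w1 i 1) (f2 := fun i => w2 i 1)
            hm1.2 hm2.2 (by simp [hw1t, hw20]) ?_
          · convert this using 2 with i
            simp [apply_ite (fun z : Pt => z 1)]
          · simp only [hw10, hw1t, hw20, hw2t]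
            rcases le_total (p 1) (q 1) with h | h
            · left
              constructor <;> [skip; skip] <;>
                · have h1 := hry.1; have h2 := hry.2
                  rw [min_eq_left h] at h1; rw [max_eq_right h] at h2; linarith
            · right
              constructor <;> [skip; skip] <;>
                · have h1 := hry.1; have h2 := hry.2
                  rw [min_eq_right h] at h1; rw [max_eq_left h] at h2; linarith
      · intro i hit
        by_cases h : i ≤ t1
        · simp only [h, if_true]
          exact sub1 (hr1 i h)
        · simp only [h, if_false]
          exact sub2 (hr2 (i - t1) (by omega))

/-- in the rectangle of influence graph of `P`, every pair of distinct
points is joined by an `xy`-monotone path staying in the rectangle with those corners. -/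
theorem rig_connected_by_xyMonotone_path_in_rect (P : Finset Pt) (p q : Pt)
    (hp : p ∈ P) (hq : q ∈ P) (hpq : p ≠ q) :
    ∃ (w : ℕ → Pt) (t : ℕ), w 0 = p ∧ w t = q ∧
      (∀ i : ℕ, i < t → RIGAdj P (w i) (w (i + 1))) ∧
      XYMono w t ∧ (∀ i : ℕ, i ≤ t → w i ∈ Rect p q) := by
  classical
  exact rig_main_aux (P.filter (fun z => z ∈ Rect p q)).card P p q hp hq hpq le_rfl

end
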